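/- Let F be a finite field, V a finite-dimensional F-vector space of dimension at least 4, q : V → F a non-degenerate quadratic form, and a ∈ F with a ≠ 0. Then diam(G_{q,a}) = 2. -/

import Mathlib

open QuadraticMap Module Polynomial

theorem aux_pow_surj (F : Type*) [Field F] [Fintype F] (K : Type*) [Field K] [Algebra F K]
    [Fintype K] (hK : Fintype.card K = Fintype.card F ^ 2)
    (a : F) (ha : a ≠ 0) : ∃ z : K, z ^ (Fintype.card F + 1) = algebraMap F K a := by
  classical
  set Q := Fintype.card F with hQ
  have hQ2 : 2 ≤ Q := Fintype.one_lt_card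
  obtain ⟨g, hg⟩ := IsCyclic.exists_generator (α := Kˣ)
  have horder : orderOf g = Q ^ 2 - 1 := by
    rw [orderOf_eq_card_of_forall_mem_zpowers hg, Nat.card_eq_fintype_card,
      Fintype.card_units, hK]
  have hfac : Q ^ 2 - 1 = (Q + 1) * (Q - 1) := by
    have h2 : ∀ m : ℕ, (m + 2) ^ 2 - 1 = (m + 2 + 1) * (m + 2 - 1) := by
      intro m
      have e1 : (m + 2) ^ 2 = m * m + 4 * m + 4 := by ring
      have e3 : m + 2 - 1 = m + 1 := rfl
      have e2 : (m + 2 + 1) * (m + 1) = m * m + 4 * m + 3 := by ring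
      rw [e3]
      omega
    obtain ⟨m, hm⟩ : ∃ m, Q = m + 2 := ⟨Q - 2, by omega⟩
    rw [hm]; exact h2 m
  have horderh : orderOf (g ^ (Q + 1)) = Q - 1 := by
    rw [orderOf_pow, horder, Nat.gcd_eq_right ⟨Q - 1, hfac⟩, hfac,
      Nat.mul_div_cancel_left _ (by omega)]
  set h : Kˣ := g ^ (Q + 1) with hh
  have hordc : orderOf ((h : K)) = Q - 1 := by rw [orderOf_units, horderh]
  set poly : K[X] := X ^ (Q - 1) - C 1 with hpoly
  have hpne : poly ≠ 0 := X_pow_sub_C_ne_zero (by omega) 1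
  have hdeg : poly.natDegree = Q - 1 := natDegree_X_pow_sub_C
  set T : Finset K := poly.roots.toFinset with hT
  have hTcard : T.card ≤ Q - 1 := le_trans (Multiset.toFinset_card_le _) (by
    simpa [hdeg] using Polynomial.card_roots' poly)
  set S : Finset K := (Finset.range (Q - 1)).image (fun n : ℕ => (h : K) ^ n) with hS
  have hScard : S.card = Q - 1 := by
    rw [hS, Finset.card_image_of_injOn, Finset.card_range]
    intro i hi j hj hij
    exact pow_injOn_Iio_orderOf (by simpa [hordc] using Finset.mem_range.mp hi)
      (by simpa [hordc] using Finset.mem_range.mp hj) hij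
  have hSsubT : S ⊆ T := by
    intro z hz
    obtain ⟨n, _, rfl⟩ := Finset.mem_image.mp hz
    have hz1 : ((h : K) ^ n) ^ (Q - 1) = 1 := by
      rw [← pow_mul, mul_comm, pow_mul, ← hordc, pow_orderOf_eq_one, one_pow]
    rw [hT, Multiset.mem_toFinset, mem_roots hpne]
    simp [hpoly, IsRoot, hz1]
  have hST : S = T := Finset.eq_of_subset_of_card_le hSsubT (by omega)
  have haT : algebraMap F K a ∈ T := by
    have : (algebraMap F K a) ^ (Q - 1) = 1 := by
      rw [← map_pow, FiniteField.pow_card_sub_one_eq_one a ha, map_one]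
    rw [hT, Multiset.mem_toFinset, mem_roots hpne]
    simp [hpoly, IsRoot, this]
  rw [← hST] at haT
  obtain ⟨n, _, hn⟩ := Finset.mem_image.mp haT
  refine ⟨(g : K) ^ n, ?_⟩
  have hcoe : (h : K) = (g : K) ^ (Q + 1) := by rw [hh, Units.val_pow_eq_pow_val]
  rw [← hn, hcoe, ← pow_mul, ← pow_mul, mul_comm]



theorem aux_binary {F : Type*} [Field F] [Fintype F] (r s t : F) (hr : r ≠ 0)
    (hroot : ∀ x : F, r * x ^ 2 + s * x + t ≠ 0) (a : F) (ha : a ≠ 0) :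
    ∃ x y : F, r * x ^ 2 + s * (x * y) + t * y ^ 2 = a := by
  classical
  set s' := s / r with hs'
  set t' := t / r with ht'
  set p' : F[X] := X ^ 2 + C s' * X + C t' with hp'
  have hform : p' = C 1 * X ^ 2 + C s' * X + C t' := by rw [map_one, one_mul]
  have hmon : p'.Monic := by
    rw [hp', add_assoc]
    apply monic_X_pow_add
    apply lt_of_le_of_lt (degree_add_le _ _)
    rw [max_lt_iff]
    refine ⟨lt_of_le_of_lt (degree_C_mul_X_le s') (by norm_num),
      lt_of_le_of_lt (degree_C_le) (by norm_num)⟩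
  have hndeg : p'.natDegree = 2 := by rw [hform]; exact natDegree_quadratic one_ne_zero
  have hne : p' ≠ 0 := hmon.ne_zero
  have hevalform : ∀ x : F, r * p'.eval x = r * x ^ 2 + s * x + t := by
    intro x
    simp only [hp', eval_add, eval_mul, eval_pow, eval_X, eval_C, hs', ht']
    field_simp
  have heval : ∀ x : F, p'.eval x ≠ 0 := by
    intro x hx
    apply hroot x
    have := hevalform x
    rw [hx, mul_zero] at this
    exact this.symm
  have hirr : Irreducible p' := by
    rw [irreducible_iff_roots_eq_zero_of_degree_le_three (by omega) (by omega)]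
    rw [Multiset.eq_zero_iff_forall_notMem]
    intro z hz
    exact heval z ((mem_roots hne).mp hz)
  haveI : Fact (Irreducible p') := ⟨hirr⟩
  set K := AdjoinRoot p' with hK
  set pb : PowerBasis F K := AdjoinRoot.powerBasis hne with hpb
  have hdim : pb.dim = 2 := by rw [hpb, AdjoinRoot.powerBasis_dim, hndeg]
  haveI : Fintype K := Module.fintypeOfFintype pb.basis
  have hcard : Fintype.card K = Fintype.card F ^ 2 := by
    rw [Module.card_fintype pb.basis, Fintype.card_fin, hdim]
  obtain ⟨z, hz⟩ := aux_pow_surj F K hcard (a / r) (div_ne_zero ha hr)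
  set θ : K := AdjoinRoot.root p' with hθdef
  have hrel : θ ^ 2 + algebraMap F K s' * θ + algebraMap F K t' = 0 := by
    have h0 : (Polynomial.aeval θ) p' = 0 := by
      rw [hθdef]
      exact AdjoinRoot.aeval_eq p' ▸ by simpa using AdjoinRoot.eval₂_root p'
    simpa [hp', map_add, map_mul, map_pow, aeval_X, aeval_C] using h0
  -- express z in terms of the basis
  obtain ⟨c₀, c₁, hzrepr⟩ : ∃ c₀ c₁ : F,
      z = algebraMap F K c₀ + algebraMap F K c₁ * θ := by
    obtain ⟨f, hf⟩ := AdjoinRoot.mk_surjective (g := p') z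
    set rem := f %ₘ p' with hrem
    have hzrem : z = (Polynomial.aeval θ) rem := by
      have hsplit : rem + p' * (f /ₘ p') = f := modByMonic_add_div f p'
      have : (Polynomial.aeval θ) f = (Polynomial.aeval θ) rem := by
        rw [← hsplit, map_add, map_mul]
        have : (Polynomial.aeval θ) p' = 0 := by
          rw [hθdef]
          exact AdjoinRoot.aeval_eq p' ▸ by simpa using AdjoinRoot.eval₂_root p'
        rw [this, zero_mul, add_zero]
      rw [← hf, ← this, AdjoinRoot.aeval_eq]
    have hlt : rem.degree < ((2 : ℕ) : WithBot ℕ) := by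
      have := degree_modByMonic_lt f hmon
      rwa [degree_eq_natDegree hne, hndeg] at this
    have hle1 : rem.degree ≤ 1 := by
      rcases eq_or_ne rem 0 with h | h
      · simp [h]
      · rw [degree_eq_natDegree h] at hlt ⊢
        exact_mod_cast Nat.lt_succ_iff.mp (by exact_mod_cast hlt)
    refine ⟨rem.coeff 0, rem.coeff 1, ?_⟩
    rw [hzrem, eq_X_add_C_of_degree_le_one hle1]
    simp [map_add, map_mul, aeval_X, aeval_C]
    ring
  -- Frobenius
  set Q := Fintype.card F with hQdef
  obtain ⟨p, hchar⟩ := CharP.exists F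
  haveI : CharP F p := hchar
  haveI : CharP K p := charP_of_injective_algebraMap (algebraMap F K).injective p
  obtain ⟨n, hp, hQ⟩ := FiniteField.card F p
  haveI : Fact (Nat.Prime p) := ⟨hp⟩
  have hQ' : Q = p ^ (n : ℕ) := hQ
  have hQpos : 0 < Q := Fintype.card_pos
  have hfrob : ∀ u v : K, (u + v) ^ Q = u ^ Q + v ^ Q := by
    intro u v
    rw [hQ']
    exact add_pow_char_pow u v p _
  have halgQ : ∀ c : F, (algebraMap F K c) ^ Q = algebraMap F K c := by
    intro c
    rw [← map_pow, FiniteField.pow_card]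
  -- θ ^ Q is a root of p'
  have hrootQ : (θ ^ Q) ^ 2 + algebraMap F K s' * (θ ^ Q) + algebraMap F K t' = 0 := by
    calc (θ ^ Q) ^ 2 + algebraMap F K s' * (θ ^ Q) + algebraMap F K t'
        = (θ ^ 2 + algebraMap F K s' * θ + algebraMap F K t') ^ Q := by
          rw [hfrob, hfrob, mul_pow, halgQ, halgQ, ← pow_mul, ← pow_mul, mul_comm 2 Q]
      _ = 0 := by rw [hrel]; exact zero_pow hQpos.ne'
  have hkey : ∀ y : K, y ^ 2 + algebraMap F K s' * y + algebraMap F K t'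
      = (y - θ) * (y + algebraMap F K s' + θ) := by
    intro y
    linear_combination hrel
  rw [hkey] at hrootQ
  rcases mul_eq_zero.mp hrootQ with hcase | hcase
  · -- θ ^ Q = θ : impossible, θ would lie in F
    exfalso
    have hθQ : θ ^ Q = θ := sub_eq_zero.mp hcase
    set poly2 : K[X] := X ^ Q - X with hpoly2
    have hdeg2 : poly2.degree = (Q : WithBot ℕ) := by
      rw [hpoly2, degree_sub_eq_left_of_degree_lt, degree_X_pow]
      rw [degree_X_pow, degree_X]
      exact_mod_cast Fintype.one_lt_card
    have hne2 : poly2 ≠ 0 := fun h => by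
      rw [h, degree_zero] at hdeg2
      exact (by simp : (⊥ : WithBot ℕ) ≠ (Q : WithBot ℕ)) hdeg2
    have hndeg2 : poly2.natDegree = Q := natDegree_eq_of_degree_eq_some hdeg2
    set A := poly2.roots.toFinset with hA
    have hAcard : A.card ≤ Q := le_trans (Multiset.toFinset_card_le _)
      (by simpa [hndeg2] using Polynomial.card_roots' poly2)
    set B := Finset.univ.image (algebraMap F K) with hB
    have hBcard : B.card = Q := by
      rw [hB, Finset.card_image_of_injective _ (algebraMap F K).injective, Finset.card_univ]
    have hBsubA : B ⊆ A := by
      intro w hw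
      obtain ⟨c, _, rfl⟩ := Finset.mem_image.mp hw
      rw [hA, Multiset.mem_toFinset, mem_roots hne2]
      simp [hpoly2, IsRoot, halgQ c]
    have hBA : B = A := Finset.eq_of_subset_of_card_le hBsubA (by omega)
    have hθA : θ ∈ A := by
      rw [hA, Multiset.mem_toFinset, mem_roots hne2]
      simp [hpoly2, IsRoot, hθQ]
    rw [← hBA] at hθA
    obtain ⟨c, _, hc⟩ := Finset.mem_image.mp hθA
    have h0 : (Polynomial.aeval θ) p' = 0 := by
      rw [hθdef]
      exact AdjoinRoot.aeval_eq p' ▸ by simpa using AdjoinRoot.eval₂_root p'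
    rw [← hc, aeval_algebraMap_apply_eq_algebraMap_eval] at h0
    exact heval c ((map_eq_zero_iff _ (algebraMap F K).injective).mp h0)
  · -- θ ^ Q = -s'' - θ
    have hθQ : θ ^ Q = -(algebraMap F K s') - θ := by
      linear_combination hcase
    have hzQ : z ^ Q = algebraMap F K c₀ + algebraMap F K c₁ * θ ^ Q := by
      rw [hzrepr, hfrob, mul_pow, halgQ, halgQ]
    have hnorm : z ^ (Q + 1) = algebraMap F K (c₀ ^ 2 - s' * (c₀ * c₁) + t' * c₁ ^ 2) := by
      rw [pow_succ, hzQ, hθQ, hzrepr]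
      push_cast [map_add, _root_.map_sub, map_mul, map_pow]
      linear_combination (-((algebraMap F K c₁) ^ 2)) * hrel
    rw [hnorm] at hz
    have heq : c₀ ^ 2 - s' * (c₀ * c₁) + t' * c₁ ^ 2 = a / r :=
      (algebraMap F K).injective hz
    refine ⟨c₀, -c₁, ?_⟩
    calc r * c₀ ^ 2 + s * (c₀ * -c₁) + t * (-c₁) ^ 2
        = r * (c₀ ^ 2 - s' * (c₀ * c₁) + t' * c₁ ^ 2) := by
          rw [hs', ht']; field_simp; ring
      _ = r * (a / r) := by rw [heq]
      _ = a := by field_simp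


section
variable {F V : Type*} [Field F] [AddCommGroup V] [Module F V]

theorem aux_expand (q : QuadraticForm F V) (x y : V) :
    q (x + y) = q x + q y + polar ⇑q x y := by
  simp only [QuadraticMap.polar]
  ring

theorem aux_smul (q : QuadraticForm F V) (c : F) (x : V) : q (c • x) = c ^ 2 * q x := by
  rw [QuadraticMap.map_smul, smul_eq_mul]
  ring

theorem aux_polar_self (q : QuadraticForm F V) (x : V) (hx : q x = 0) : polar ⇑q x x = 0 := by
  rw [QuadraticMap.polar_self, hx, smul_zero]

/-- hyperbolic partner -/
theorem aux_hyp (q : QuadraticForm F V)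
    (hnd : ∀ x : V, (∀ y : V, polar (⇑q) x y = 0) → x = 0)
    {e : V} (he : e ≠ 0) (hqe : q e = 0) :
    ∃ f : V, q f = 0 ∧ polar ⇑q e f = 1 := by
  have hg : ∃ g, polar ⇑q e g ≠ 0 := by
    by_contra h
    push_neg at h
    exact he (hnd e h)
  obtain ⟨g, hg⟩ := hg
  obtain ⟨g₁, hpg₁⟩ : ∃ g₁, polar ⇑q e g₁ = 1 :=
    ⟨(polar ⇑q e g)⁻¹ • g, by rw [polar_smul_right, smul_eq_mul, inv_mul_cancel₀ hg]⟩
  refine ⟨g₁ + (-(q g₁)) • e, ?_, ?_⟩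
  · rw [aux_expand, aux_smul, hqe, polar_smul_right, smul_eq_mul,
      polar_comm (⇑q) g₁ e, hpg₁]
    ring
  · rw [polar_add_right, polar_smul_right, aux_polar_self q e hqe, hpg₁, smul_zero]
    ring
end

/-- a nondegenerate quadratic form over a finite field in dim ≥ 2 represents all nonzero -/
theorem aux_represents {F U : Type*} [Field F] [Fintype F] [AddCommGroup U] [Module F U]
    [FiniteDimensional F U] (q : QuadraticForm F U)
    (hnd : ∀ x : U, (∀ y : U, polar (⇑q) x y = 0) → x = 0)
    (hdim : 2 ≤ finrank F U) (a : F) (ha : a ≠ 0) : ∃ u : U, q u = a := by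
  by_cases hiso : ∃ v : U, v ≠ 0 ∧ q v = 0
  · obtain ⟨v, hv, hqv⟩ := hiso
    obtain ⟨f, hqf, hpf⟩ := aux_hyp q hnd hv hqv
    refine ⟨a • v + f, ?_⟩
    rw [aux_expand, aux_smul, hqv, hqf, polar_smul_left, smul_eq_mul, hpf]
    ring
  · push_neg at hiso
    set B := finBasis F U with hB
    set i0 : Fin (finrank F U) := ⟨0, by omega⟩ with hi0
    set i1 : Fin (finrank F U) := ⟨1, by omega⟩ with hi1
    have h0 : i0 ≠ i1 := by
      intro h
      have := congrArg Fin.val h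
      simp [hi0, hi1] at this
    have hune : ∀ x : F, x • B i0 + B i1 ≠ 0 := by
      intro x hx
      have h2 := congrArg (fun w => B.repr w i1) hx
      simp only [map_add, _root_.map_smul, B.repr_self, map_zero, Finsupp.smul_apply,
        Finsupp.single_apply, smul_eq_mul] at h2
      simp [h0] at h2
    have hr : q (B i0) ≠ 0 := hiso _ (B.ne_zero i0)
    have hroot : ∀ x : F, q (B i0) * x ^ 2 + polar ⇑q (B i0) (B i1) * x + q (B i1) ≠ 0 := by
      intro x hx
      apply hune x
      have hq : q (x • B i0 + B i1) = 0 := by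
        rw [aux_expand, aux_smul, polar_smul_left, smul_eq_mul]
        rw [← hx]; ring
      by_contra hne
      exact hiso _ hne hq
    obtain ⟨x, y, hxy⟩ := aux_binary (q (B i0)) (polar ⇑q (B i0) (B i1)) (q (B i1)) hr hroot a ha
    refine ⟨x • B i0 + y • B i1, ?_⟩
    rw [aux_expand, aux_smul, aux_smul, polar_smul_left, polar_smul_right, smul_eq_mul,
      smul_eq_mul, ← hxy]
    ring


theorem aux_isotropic {F U : Type*} [Field F] [Fintype F] [AddCommGroup U] [Module F U]
    [FiniteDimensional F U] (q : QuadraticForm F U) (hdim : 3 ≤ finrank F U) :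
    ∃ v : U, v ≠ 0 ∧ q v = 0 := by
  classical
  set n := finrank F U with hn
  set B := finBasis F U with hB
  set P : MvPolynomial (Fin n) F :=
    (∑ i, MvPolynomial.C (q (B i)) * (MvPolynomial.X i * MvPolynomial.X i)) +
    ∑ ij ∈ Finset.univ.sym2.filter (fun ij => ¬ ij.IsDiag),
      Sym2.lift ⟨fun i j => MvPolynomial.C (polar ⇑q (B i) (B j)) *
        (MvPolynomial.X i * MvPolynomial.X j),
        fun i j => by dsimp only; rw [polar_comm (⇑q) (B i) (B j)]; ring⟩ ij with hP
  have heval : ∀ x : Fin n → F, MvPolynomial.eval x P = q (∑ i, x i • B i) := by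
    intro x
    rw [QuadraticMap.map_sum, hP, map_add, map_sum, map_sum]
    congr 1
    · refine Finset.sum_congr rfl fun i _ => ?_
      simp only [map_mul, MvPolynomial.eval_C, MvPolynomial.eval_X]
      rw [QuadraticMap.map_smul, smul_eq_mul]
      ring
    · refine Finset.sum_congr rfl fun ij _ => ?_
      induction ij using Sym2.inductionOn with
      | hf i j =>
        simp only [Sym2.lift_mk, map_mul, MvPolynomial.eval_C, MvPolynomial.eval_X]
        rw [Sym2.map_mk, polarSym2_sym2Mk, polar_smul_left, polar_smul_right, smul_eq_mul, smul_eq_mul]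
        ring
  have hdegP : P.totalDegree ≤ 2 := by
    apply le_trans (MvPolynomial.totalDegree_add _ _)
    rw [max_le_iff]
    constructor
    · apply le_trans (MvPolynomial.totalDegree_finset_sum _ _)
      apply Finset.sup_le
      intro i _
      have hX : (MvPolynomial.X i * MvPolynomial.X i : MvPolynomial (Fin n) F).totalDegree
          ≤ 2 := by
        apply le_trans (MvPolynomial.totalDegree_mul _ _)
        simp [MvPolynomial.totalDegree_X]
      apply le_trans (MvPolynomial.totalDegree_mul _ _)
      rw [MvPolynomial.totalDegree_C, zero_add]
      exact hX
    · apply le_trans (MvPolynomial.totalDegree_finset_sum _ _)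
      apply Finset.sup_le
      intro ij _
      induction ij using Sym2.inductionOn with
      | hf i j =>
        rw [Sym2.lift_mk]
        have hX : (MvPolynomial.X i * MvPolynomial.X j : MvPolynomial (Fin n) F).totalDegree
            ≤ 2 := by
          apply le_trans (MvPolynomial.totalDegree_mul _ _)
          simp [MvPolynomial.totalDegree_X]
        apply le_trans (MvPolynomial.totalDegree_mul _ _)
        rw [MvPolynomial.totalDegree_C, zero_add]
        exact hX
  obtain ⟨p, hcharp⟩ := CharP.exists F
  haveI : CharP F p := hcharp
  obtain ⟨m, hp, hcard⟩ := FiniteField.card F p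
  have hdvd : p ∣ Fintype.card { x : Fin n → F // MvPolynomial.eval x P = 0 } :=
    char_dvd_card_solutions p (by rw [Fintype.card_fin]; omega)
  have hzero : MvPolynomial.eval (0 : Fin n → F) P = 0 := by
    rw [heval]
    simp
  haveI : Nonempty { x : Fin n → F // MvPolynomial.eval x P = 0 } := ⟨⟨0, hzero⟩⟩
  have hcard1 : 1 < Fintype.card { x : Fin n → F // MvPolynomial.eval x P = 0 } := by
    have h1 : 0 < Fintype.card { x : Fin n → F // MvPolynomial.eval x P = 0 } :=
      Fintype.card_pos
    have := Nat.le_of_dvd h1 hdvd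
    have := hp.two_le
    omega
  obtain ⟨y, hy⟩ := Fintype.exists_ne_of_one_lt_card hcard1 ⟨0, hzero⟩
  refine ⟨∑ i, y.val i • B i, ?_, ?_⟩
  · intro h0
    apply hy
    have hx0 : y.val = 0 := by
      have := B.equivFun_symm_apply y.val
      rw [← this] at h0
      have := B.equivFun.symm.injective (by rw [h0, map_zero] : B.equivFun.symm y.val = B.equivFun.symm 0)
      exact this
    exact Subtype.ext hx0
  · rw [← heval y.val]
    exact y.prop


/-- The representation graph `G_{q,a}`: vertices are the vectors of `V`, and distinct
`x, y` are adjacent iff `q (x - y) = a`. -/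
def repGraph {F V : Type*} [Field F] [AddCommGroup V] [Module F V]
    (q : QuadraticForm F V) (a : F) : SimpleGraph V where
  Adj x y := x ≠ y ∧ q (x - y) = a
  symm := by
    constructor
    rintro x y ⟨hxy, h⟩
    refine ⟨hxy.symm, ?_⟩
    rw [← neg_sub x y, QuadraticMap.map_neg]
    exact h
  loopless := by constructor; rintro x ⟨h, -⟩; exact h rfl

/-- Over a finite field, a non-degenerate quadratic form of dimension at least `4` and
`a ≠ 0` yield `diam G_{q,a} = 2`. -/
theorem stmt_15 {F V : Type*} [Field F] [Fintype F]
    [AddCommGroup V] [Module F V] [FiniteDimensional F V]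
    (q : QuadraticForm F V) (hdim : 4 ≤ Module.finrank F V)
    (hnd : ∀ x : V, (∀ y : V, polar (⇑q) x y = 0) → x = 0)
    (a : F) (ha : a ≠ 0) :
    (repGraph q a).ediam = 2 := by
  classical
  obtain ⟨e, he0, hqe⟩ := aux_isotropic q (by omega)
  obtain ⟨f, hqf, hef⟩ := aux_hyp q hnd he0 hqe
  have hpee : polar ⇑q e e = 0 := aux_polar_self q e hqe
  have hpff : polar ⇑q f f = 0 := aux_polar_self q f hqf
  have hfe : polar ⇑q f e = 1 := by rw [polar_comm]; exact hef
  set W : Submodule F V :=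
    LinearMap.ker (q.polarBilin e) ⊓ LinearMap.ker (q.polarBilin f) with hW
  have hmemW : ∀ v : V, v ∈ W ↔ polar ⇑q e v = 0 ∧ polar ⇑q f v = 0 := by
    intro v
    simp [hW, Submodule.mem_inf, LinearMap.mem_ker, polarBilin_apply_apply]
  -- the projection to W
  have hproj : ∀ z : V, z - polar ⇑q f z • e - polar ⇑q e z • f ∈ W := by
    intro z
    rw [hmemW]
    constructor
    · rw [polar_sub_right, polar_sub_right, polar_smul_right, polar_smul_right,
        hpee, hef, smul_eq_mul, smul_eq_mul]
      ring
    · rw [polar_sub_right, polar_sub_right, polar_smul_right, polar_smul_right,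
        hpff, hfe, smul_eq_mul, smul_eq_mul]
      ring
  have hpolarproj : ∀ w z : V, w ∈ W →
      polar ⇑q w (z - polar ⇑q f z • e - polar ⇑q e z • f) = polar ⇑q w z := by
    intro w z hw
    obtain ⟨hwe, hwf⟩ := (hmemW w).mp hw
    rw [polar_sub_right, polar_sub_right, polar_smul_right, polar_smul_right,
      polar_comm (⇑q) w e, hwe, polar_comm (⇑q) w f, hwf, smul_eq_mul, smul_eq_mul]
    ring
  -- dimension of W
  have hdimW : 2 ≤ finrank F W := by
    have h1 := LinearMap.finrank_range_add_finrank_ker (q.polarBilin e)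
    have h2 := LinearMap.finrank_range_add_finrank_ker (q.polarBilin f)
    have h3 : finrank F (LinearMap.range (q.polarBilin e)) ≤ 1 := by
      have := Submodule.finrank_le (LinearMap.range (q.polarBilin e))
      rwa [finrank_self] at this
    have h4 : finrank F (LinearMap.range (q.polarBilin f)) ≤ 1 := by
      have := Submodule.finrank_le (LinearMap.range (q.polarBilin f))
      rwa [finrank_self] at this
    have h5 := Submodule.finrank_sup_add_finrank_inf_eq
      (LinearMap.ker (q.polarBilin e)) (LinearMap.ker (q.polarBilin f))
    have h6 : finrank F ((LinearMap.ker (q.polarBilin e)) ⊔ (LinearMap.ker (q.polarBilin f)) :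
        Submodule F V) ≤ finrank F V := Submodule.finrank_le _
    have h7 : finrank F W =
        finrank F ((LinearMap.ker (q.polarBilin e)) ⊓ (LinearMap.ker (q.polarBilin f)) :
        Submodule F V) := by rw [hW]
    omega
  -- polar of restricted form
  have hpolarW : ∀ u v : W, polar ⇑(q.comp W.subtype) u v = polar ⇑q u.val v.val := by
    intro u v
    simp [QuadraticMap.polar, QuadraticMap.comp_apply]
  -- nondegeneracy of restriction
  have hndW : ∀ u : W, (∀ v : W, polar ⇑(q.comp W.subtype) u v = 0) → u = 0 := by
    intro u hu
    have hu' : ∀ y : V, polar ⇑q u.val y = 0 := by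
      intro y
      have h1 := hu ⟨_, hproj y⟩
      rw [hpolarW] at h1
      have h2 := hpolarproj u.val y u.2
      rw [← h2]
      exact h1
    exact Subtype.ext (hnd u.val hu')
  -- the restriction represents a
  obtain ⟨ua, hua⟩ := aux_represents (q.comp W.subtype) hndW hdimW a ha
  rw [QuadraticMap.comp_apply, Submodule.subtype_apply] at hua
  obtain ⟨huae, huaf⟩ := (hmemW ua.val).mp ua.2
  -- decomposition of q (w - s)
  have hsub : ∀ w s : V, q (w - s) = q w + q s - polar ⇑q w s := by
    intro w s
    rw [sub_eq_add_neg, aux_expand, QuadraticMap.map_neg, polar_neg_right]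
    ring
  -- key existence lemma
  have hkey : ∀ w : V, w ≠ 0 → ∃ s : V, q s = a ∧ q (w - s) = a := by
    intro w hw
    have hred : ∀ s : V, q s = a → polar ⇑q w s = q w → q (w - s) = a := by
      intro s h1 h2
      rw [hsub, h1, h2]
      ring
    by_cases hx : polar ⇑q w f ≠ 0
    · refine ⟨((q w - polar ⇑q w ua) / polar ⇑q w f) • f + ua.val, ?_, ?_⟩
      · rw [aux_expand, aux_smul, hqf, polar_smul_left, smul_eq_mul,
          huaf, hua]
        ring
      · apply hred
        · rw [aux_expand, aux_smul, hqf, polar_smul_left, smul_eq_mul,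
            huaf, hua]
          ring
        · rw [polar_add_right, polar_smul_right, smul_eq_mul,
            div_mul_cancel₀ _ hx]
          ring
    · push_neg at hx
      by_cases hy : polar ⇑q w e ≠ 0
      · refine ⟨((q w - polar ⇑q w ua) / polar ⇑q w e) • e + ua.val, ?_, ?_⟩
        · rw [aux_expand, aux_smul, hqe, polar_smul_left, smul_eq_mul,
            huae, hua]
          ring
        · apply hred
          · rw [aux_expand, aux_smul, hqe, polar_smul_left, smul_eq_mul,
              huae, hua]
            ring
          · rw [polar_add_right, polar_smul_right, smul_eq_mul,
              div_mul_cancel₀ _ hy]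
            ring
      · push_neg at hy
        -- w ∈ W
        have hwW : w ∈ W := by
          rw [hmemW]
          exact ⟨by rw [polar_comm]; exact hy, by rw [polar_comm]; exact hx⟩
        obtain ⟨z, hz⟩ : ∃ z : V, polar ⇑q w z ≠ 0 := by
          by_contra h
          push_neg at h
          exact hw (hnd w h)
        obtain ⟨u₁, hu₁e, hu₁f, hwu₁⟩ : ∃ u₁ : V, polar ⇑q e u₁ = 0 ∧
            polar ⇑q f u₁ = 0 ∧ polar ⇑q w u₁ = q w := by
          have hz'W := hproj z
          have hwz' := hpolarproj w z hwW
          obtain ⟨hz'e, hz'f⟩ := (hmemW _).mp hz'W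
          refine ⟨(q w / polar ⇑q w (z - polar ⇑q f z • e - polar ⇑q e z • f)) •
            (z - polar ⇑q f z • e - polar ⇑q e z • f), ?_, ?_, ?_⟩
          · rw [polar_smul_right, hz'e, smul_zero]
          · rw [polar_smul_right, hz'f, smul_zero]
          · rw [polar_smul_right, smul_eq_mul, div_mul_cancel₀]
            rw [hwz']
            exact hz
        refine ⟨e + ((a - q u₁) • f + u₁), ?_, ?_⟩
        · have hq1 : q ((a - q u₁) • f + u₁) = q u₁ := by
            rw [aux_expand, aux_smul, hqf, polar_smul_left, hu₁f, smul_zero]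
            ring
          have hq2 : polar ⇑q e ((a - q u₁) • f + u₁) = a - q u₁ := by
            rw [polar_add_right, polar_smul_right, hef, hu₁e, smul_eq_mul]
            ring
          rw [aux_expand, hqe, hq1, hq2]
          ring
        · apply hred
          · have hq1 : q ((a - q u₁) • f + u₁) = q u₁ := by
              rw [aux_expand, aux_smul, hqf, polar_smul_left, hu₁f, smul_zero]
              ring
            have hq2 : polar ⇑q e ((a - q u₁) • f + u₁) = a - q u₁ := by
              rw [polar_add_right, polar_smul_right, hef, hu₁e, smul_eq_mul]
              ring
            rw [aux_expand, hqe, hq1, hq2]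
            ring
          · rw [polar_add_right, polar_add_right, polar_smul_right, hwu₁, hy, hx,
              smul_zero]
            ring
  -- distance at most two between any two vertices
  have h2dist : ∀ u v : V, (repGraph q a).edist u v ≤ 2 := by
    intro u v
    rcases eq_or_ne u v with rfl | hne
    · rw [SimpleGraph.edist_self]
      norm_num
    by_cases hqa : q (u - v) = a
    · have hadj : (repGraph q a).Adj u v := ⟨hne, hqa⟩
      rw [SimpleGraph.edist_eq_one_iff_adj.mpr hadj]
      norm_num
    · obtain ⟨s, hs1, hs2⟩ := hkey (u - v) (sub_ne_zero.mpr hne)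
      have hs0 : s ≠ 0 := by
        intro h
        rw [h] at hs1
        simp at hs1
        exact ha hs1.symm
      have hsw : u - v - s ≠ 0 := by
        intro h
        rw [h] at hs2
        simp at hs2
        exact ha hs2.symm
      have adj1 : (repGraph q a).Adj u (u - s) := by
        refine ⟨?_, ?_⟩
        · intro h
          apply hs0
          have : u - (u - s) = 0 := by rw [← h]; abel
          have h2 : u - (u - s) = s := by abel
          rw [h2] at this
          exact this
        · have h2 : u - (u - s) = s := by abel
          rw [h2, hs1]
      have adj2 : (repGraph q a).Adj (u - s) v := by
        refine ⟨?_, ?_⟩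
        · intro h
          apply hsw
          rw [← h]
          abel
        · have h2 : u - s - v = u - v - s := by abel
          rw [h2, hs2]
      calc (repGraph q a).edist u v
          ≤ (repGraph q a).edist u (u - s) + (repGraph q a).edist (u - s) v :=
            SimpleGraph.edist_triangle
        _ ≤ 1 + 1 := add_le_add
            (le_of_eq (SimpleGraph.edist_eq_one_iff_adj.mpr adj1))
            (le_of_eq (SimpleGraph.edist_eq_one_iff_adj.mpr adj2))
        _ = 2 := by norm_num
  -- lower bound via the isotropic vector e
  have hlow : 2 ≤ (repGraph q a).edist e 0 := by
    have hne10 : (repGraph q a).edist e 0 ≠ 0 := by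
      intro h
      exact he0 (SimpleGraph.edist_eq_zero_iff.mp h)
    have hne11 : (repGraph q a).edist e 0 ≠ 1 := by
      intro h
      obtain ⟨-, hadj⟩ := SimpleGraph.edist_eq_one_iff_adj.mp h
      rw [sub_zero, hqe] at hadj
      exact ha hadj.symm
    have h1 : 1 ≤ (repGraph q a).edist e 0 := by
      rw [Order.one_le_iff_pos, pos_iff_ne_zero]
      exact hne10
    have : 1 < (repGraph q a).edist e 0 := lt_of_le_of_ne h1 (Ne.symm hne11)
    exact Order.add_one_le_of_lt this
  refine le_antisymm ?_ ?_
  · exact SimpleGraph.ediam_le_of_edist_le fun u v => h2dist u v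
  · exact le_trans hlow SimpleGraph.edist_le_ediam
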